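/- arXiv:1808.02610 — 5 statements merged into one kernel-verified Lean document; each statement's English description precedes it below -/
import Mathlib

section
/- For every positive integer n and every pair of non-negative integers s, t with s ≥ t, the following combinatorial identity holds: ∑_{j=0}^{n} (n choose j) / ((n+s) choose (j+t)) = (s + 1 + n) / ((s+1) · (s choose t)). -/
lemma key_frac (m k : ℕ) (hk : k ≤ m) :
    (1:ℚ)/((m+1).choose k : ℚ) + 1/((m+1).choose (k+1) : ℚ)
      = ((m:ℚ)+2)/(((m:ℚ)+1) * (m.choose k : ℚ)) := by
  have h1 := congrArg (Nat.cast : ℕ → ℚ) (Nat.choose_mul_succ_eq m k)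
  push_cast [Nat.cast_sub (le_trans hk (Nat.le_succ m))] at h1
  have h2 := congrArg (Nat.cast : ℕ → ℚ) (Nat.add_one_mul_choose_eq m k)
  push_cast at h2
  have ha : ((m+1).choose k : ℚ) ≠ 0 :=
    Nat.cast_ne_zero.mpr (Nat.choose_pos (le_trans hk (Nat.le_succ m))).ne'
  have hb : ((m+1).choose (k+1) : ℚ) ≠ 0 :=
    Nat.cast_ne_zero.mpr (Nat.choose_pos (Nat.succ_le_succ hk)).ne'
  have hc : (m.choose k : ℚ) ≠ 0 := Nat.cast_ne_zero.mpr (Nat.choose_pos hk).ne'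
  have hm : ((m:ℚ)+1) ≠ 0 := by positivity
  field_simp
  nlinarith [h1, h2]

lemma comb_aux (s t : ℕ) (hst : t ≤ s) (n : ℕ) :
    ∑ j ∈ Finset.range (n + 1), (n.choose j : ℚ) / ((n + s).choose (j + t) : ℚ)
      = ((s : ℚ) + 1 + (n : ℚ)) / (((s : ℚ) + 1) * (s.choose t : ℚ)) := by
  have hc : (s.choose t : ℚ) ≠ 0 := Nat.cast_ne_zero.mpr (Nat.choose_pos hst).ne'
  induction n with
  | zero =>
    have hs : ((s:ℚ)+1) ≠ 0 := by positivity
    simp only [Finset.sum_range_one, Nat.choose_zero_right, Nat.cast_one, Nat.zero_add,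
      Nat.cast_zero, add_zero, zero_add]
    field_simp
  | succ n ih =>
    set A : ℕ → ℚ := fun j => (n.choose j : ℚ) / ((n + 1 + s).choose (j + t) : ℚ) with hA
    set B : ℕ → ℚ := fun j => (n.choose j : ℚ) / ((n + 1 + s).choose (j + t + 1) : ℚ) with hB
    have claim1 :
        ∑ j ∈ Finset.range (n + 1 + 1), (((n:ℕ)+1).choose j : ℚ) / ((n + 1 + s).choose (j + t) : ℚ)
          = ∑ j ∈ Finset.range (n + 1), (A j + B j) := by
      have h2 := Finset.sum_range_succ' A (n + 1)
      rw [Finset.sum_range_succ A (n+1)] at h2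
      simp only [hA, Nat.choose_succ_self, Nat.cast_zero, zero_div, add_zero] at h2
      -- h2 : ∑_{j<n+1} A j = ∑_{i<n+1} A (i+1) + A 0
      rw [Finset.sum_range_succ'
        (fun j => (((n:ℕ)+1).choose j : ℚ) / ((n + 1 + s).choose (j + t) : ℚ))]
      have hsplit : ∀ i ∈ Finset.range (n+1),
          (((n:ℕ)+1).choose (i+1) : ℚ) / ((n + 1 + s).choose (i + 1 + t) : ℚ)
            = B i + A (i+1) := by
        intro i _
        simp only [hA, hB, Nat.choose_succ_succ n i]
        rw [show i + 1 + t = i + t + 1 from by omega]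
        push_cast
        rw [add_div]
      rw [Finset.sum_congr rfl hsplit, Finset.sum_add_distrib, add_assoc]
      have hf0 : (((n:ℕ)+1).choose 0 : ℚ) / ((n + 1 + s).choose (0 + t) : ℚ) = A 0 := by
        simp [hA]
      rw [hf0, ← h2, ← Finset.sum_add_distrib]
      exact Finset.sum_congr rfl fun j _ => add_comm _ _
    rw [claim1]
    have claim2 : ∀ j ∈ Finset.range (n + 1),
        A j + B j
          = (((n:ℚ)+(s:ℚ)+2)/((n:ℚ)+(s:ℚ)+1))
              * ((n.choose j : ℚ) / ((n + s).choose (j + t) : ℚ)) := by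
      intro j hj
      have hjt : j + t ≤ n + s := by
        simp only [Finset.mem_range] at hj; omega
      have hk := key_frac (n + s) (j + t) hjt
      push_cast at hk
      simp only [hA, hB, show n + 1 + s = n + s + 1 from by omega]
      calc (n.choose j : ℚ) / ((n + s + 1).choose (j + t) : ℚ)
              + (n.choose j : ℚ) / ((n + s + 1).choose (j + t + 1) : ℚ)
          = (n.choose j : ℚ) * ((1:ℚ)/((n + s + 1).choose (j + t) : ℚ)
              + 1/((n + s + 1).choose (j + t + 1) : ℚ)) := by ring
        _ = (n.choose j : ℚ) * (((n:ℚ)+(s:ℚ)+2)/(((n:ℚ)+(s:ℚ)+1) * ((n+s).choose (j+t) : ℚ))) := by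
            rw [hk]
        _ = (((n:ℚ)+(s:ℚ)+2)/((n:ℚ)+(s:ℚ)+1))
              * ((n.choose j : ℚ) / ((n + s).choose (j + t) : ℚ)) := by
            rw [div_mul_eq_div_div]; ring
    rw [Finset.sum_congr rfl claim2, ← Finset.mul_sum, ih]
    have hns : ((n:ℚ)+(s:ℚ)+1) ≠ 0 := by positivity
    have hs : ((s:ℚ)+1) ≠ 0 := by positivity
    push_cast
    field_simp
    ring



/-- Lemma 1 of the paper (a combinatorial equality): for every positive integer `n`
and non-negative integers `s ≥ t`,
`∑_{j=0}^{n} (n choose j) / ((n+s) choose (j+t)) = (s + 1 + n) / ((s+1) * (s choose t))`. -/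
theorem combinatorial_equality (n s t : ℕ) (hn : 0 < n) (hst : t ≤ s) :
    ∑ j ∈ Finset.range (n + 1),
        (n.choose j : ℚ) / ((n + s).choose (j + t) : ℚ)
      = ((s : ℚ) + 1 + (n : ℚ)) / (((s : ℚ) + 1) * (s.choose t : ℚ)) := by
  exact comb_aux s t hst n
end

section
/- Let d ≥ 1 be an integer, let S be a nonempty subset of {1,…,d}, and let U be a nonempty subset of S. Then ∑_{A ⊆ {1,…,d}, A ∩ S = U} 1/((d−1) choose (|A|−1)) = (d/|S|) · 1/((|S|−1) choose (|U|−1)). Equivalently, writing u = |U|, s = |S|: ∑_{j=0}^{d−s} ((d−s) choose j) / ((d−1) choose (u+j−1)) = d / (s · ((s−1) choose (u−1))). -/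
open Finset

private lemma pascal_add {x y z k : ℕ} (hxy : y = x) (hz : z = x + 1) :
    x.choose k + y.choose (k + 1) = z.choose (k + 1) := by
  subst hxy hz; exact (Nat.choose_succ_succ _ _).symm

private lemma shapley_conv (a : ℕ) :
    ∀ m b : ℕ, ∑ j ∈ Finset.range (m + 1), (j + a).choose j * (m - j + b).choose (m - j)
      = (m + a + b + 1).choose m := by
  intro m
  induction m with
  | zero => intro b; simp
  | succ m ih =>
    have step : ∀ b : ℕ,
        ∑ j ∈ Finset.range (m + 2), (j + a).choose j * (m + 1 - j + b).choose (m + 1 - j)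
          = (∑ j ∈ Finset.range (m + 1),
              (j + a).choose j * ((m - j) + 1 + b).choose ((m - j) + 1))
            + (m + 1 + a).choose (m + 1) := by
      intro b
      rw [Finset.sum_range_succ]
      congr 1
      · apply Finset.sum_congr rfl
        intro j hj
        have hjm : j ≤ m := Nat.lt_succ_iff.mp (Finset.mem_range.mp hj)
        have e : m + 1 - j = (m - j) + 1 := by omega
        rw [e]
      · simp
    intro b
    induction b with
    | zero =>
      rw [step 0]
      have h1 : ∑ j ∈ Finset.range (m + 1),
          (j + a).choose j * ((m - j) + 1 + 0).choose ((m - j) + 1)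
          = ∑ j ∈ Finset.range (m + 1), (j + a).choose j * (m - j + 0).choose (m - j) := by
        apply Finset.sum_congr rfl
        intro j hj
        simp
      rw [h1, ih 0]
      exact pascal_add (by omega) (by omega)
    | succ b ihb =>
      rw [step (b + 1)]
      have h2 : ∑ j ∈ Finset.range (m + 1),
          (j + a).choose j * ((m - j) + 1 + (b + 1)).choose ((m - j) + 1)
          = (∑ j ∈ Finset.range (m + 1), (j + a).choose j * ((m - j) + (b + 1)).choose (m - j))
            + ∑ j ∈ Finset.range (m + 1),
                (j + a).choose j * ((m - j) + 1 + b).choose ((m - j) + 1) := by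
        rw [← Finset.sum_add_distrib]
        apply Finset.sum_congr rfl
        intro j hj
        have e1 : (m - j) + 1 + (b + 1) = ((m - j) + (b + 1)) + 1 := by omega
        have e2 : (m - j) + 1 + b = (m - j) + (b + 1) := by omega
        rw [e1, e2, Nat.choose_succ_succ, Nat.mul_add]
      have h3 : (∑ j ∈ Finset.range (m + 1),
            (j + a).choose j * ((m - j) + 1 + b).choose ((m - j) + 1))
          + (m + 1 + a).choose (m + 1) = (m + 1 + a + b + 1).choose (m + 1) := by
        rw [← step b]; exact ihb
      rw [h2, add_assoc, h3, ih (b + 1)]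
      exact pascal_add (by omega) (by omega)

private lemma shapley_final (a b m : ℕ) :
    ∑ j ∈ Finset.range (m + 1), (m.choose j : ℚ) * (1 / ((m + a + b).choose (j + a) : ℚ))
      = ((m + a + b + 1 : ℕ) : ℚ) / ((a + b + 1 : ℕ) : ℚ)
          * (1 / ((a + b).choose a : ℚ)) := by
  have F : ∀ n : ℕ, ((n.factorial : ℚ)) ≠ 0 := fun n => Nat.cast_ne_zero.mpr n.factorial_ne_zero
  have per : ∀ j ∈ Finset.range (m + 1),
      (m.choose j : ℚ) * (1 / ((m + a + b).choose (j + a) : ℚ))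
        = (((j + a).choose j * (m - j + b).choose (m - j) : ℕ) : ℚ)
            * (((a.factorial * b.factorial * m.factorial : ℕ) : ℚ)
              / (((m + a + b).factorial : ℕ) : ℚ)) := by
    intro j hj
    have hjm : j ≤ m := Nat.lt_succ_iff.mp (Finset.mem_range.mp hj)
    obtain ⟨i, rfl⟩ : ∃ i, m = j + i := ⟨m - j, by omega⟩
    have s1 : j + i - j = i := by omega
    have s2 : j + i + a + b - (j + a) = i + b := by omega
    have s3 : j + a - j = a := by omega
    have s4 : i + b - i = b := by omega
    push_cast
    rw [s1, Nat.cast_choose ℚ (show j ≤ j + i by omega),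
        Nat.cast_choose ℚ (show j + a ≤ j + i + a + b by omega),
        Nat.cast_choose ℚ (show j ≤ j + a by omega),
        Nat.cast_choose ℚ (show i ≤ i + b by omega), s1, s2, s3, s4]
    field_simp
  rw [Finset.sum_congr rfl per, ← Finset.sum_mul, ← Nat.cast_sum, shapley_conv]
  rw [Nat.cast_choose ℚ (show m ≤ m + a + b + 1 by omega),
      Nat.cast_choose ℚ (show a ≤ a + b by omega)]
  have s5 : m + a + b + 1 - m = a + b + 1 := by omega
  have s6 : a + b - a = b := by omega
  rw [s5, s6]
  have e1 : (m + a + b + 1).factorial = (m + a + b + 1) * (m + a + b).factorial :=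
    Nat.factorial_succ _
  have e2 : (a + b + 1).factorial = (a + b + 1) * (a + b).factorial := Nat.factorial_succ _
  rw [e1, e2]
  push_cast
  field_simp

/-- Partitioning identity for Shapley weights: for a nonempty subset `S` of `{1,…,d}`
and a nonempty `U ⊆ S`,
`∑_{A ⊆ [d], A ∩ S = U} 1 / ((d−1) choose (|A|−1)) = (d/|S|) · 1/((|S|−1) choose (|U|−1))`. -/
theorem shapley_weight_partition {d : ℕ} (hd : 1 ≤ d)
    (S U : Finset (Fin d)) (hS : S.Nonempty) (hU : U.Nonempty) (hUS : U ⊆ S) :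
    ∑ A : Finset (Fin d),
        (if A ∩ S = U then (1 : ℚ) / ((d - 1).choose (A.card - 1) : ℚ) else 0)
      = ((d : ℚ) / (S.card : ℚ)) *
          (1 / ((S.card - 1).choose (U.card - 1) : ℚ)) := by
  classical
  obtain ⟨a, ha⟩ : ∃ a, U.card = a + 1 := ⟨U.card - 1, by have := Finset.card_pos.mpr hU; omega⟩
  obtain ⟨b, hb⟩ : ∃ b, S.card = a + b + 1 :=
    ⟨S.card - U.card, by have := Finset.card_le_card hUS; omega⟩
  obtain ⟨m, hm⟩ : ∃ m, d = m + a + b + 1 := by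
    refine ⟨d - S.card, ?_⟩
    have h1 : S.card ≤ d := by simpa using S.card_le_univ
    omega
  have hSc : Sᶜ.card = m := by
    rw [Finset.card_compl]
    simp only [Fintype.card_fin]
    omega
  rw [← Finset.sum_filter]
  have hdisj : ∀ V : Finset (Fin d), V ⊆ Sᶜ → Disjoint V S := by
    intro V hV
    exact (disjoint_compl_left).mono_left hV
  have step2 : (∑ A ∈ Finset.univ.filter (fun A : Finset (Fin d) => A ∩ S = U),
        (1 : ℚ) / ((d - 1).choose (A.card - 1) : ℚ))
      = ∑ V ∈ Sᶜ.powerset, (1 : ℚ) / ((d - 1).choose (V.card + a) : ℚ) := by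
    apply Finset.sum_bij' (fun A _ => A \ S) (fun V _ => U ∪ V)
    · intro A hA
      simp only [Finset.mem_filter, Finset.mem_univ, true_and] at hA
      rw [Finset.mem_powerset]
      intro x hx
      simp only [Finset.mem_sdiff] at hx
      simpa using hx.2
    · intro V hV
      rw [Finset.mem_powerset] at hV
      simp only [Finset.mem_filter, Finset.mem_univ, true_and]
      rw [Finset.union_inter_distrib_right, Finset.inter_eq_left.mpr hUS,
        Finset.disjoint_iff_inter_eq_empty.mp (hdisj V hV), Finset.union_empty]
    · intro A hA
      simp only [Finset.mem_filter, Finset.mem_univ, true_and] at hA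
      rw [← hA]
      exact sup_inf_sdiff A S
    · intro V hV
      rw [Finset.mem_powerset] at hV
      rw [Finset.union_sdiff_distrib, Finset.sdiff_eq_empty_iff_subset.mpr hUS,
        Finset.sdiff_eq_self_iff_disjoint.mpr (hdisj V hV), Finset.empty_union]
    · intro A hA
      simp only [Finset.mem_filter, Finset.mem_univ, true_and] at hA
      have hAcard : A.card = (A \ S).card + a + 1 := by
        have hU2 : U ∪ (A \ S) = A := by rw [← hA]; exact sup_inf_sdiff A S
        have hd2 : Disjoint U (A \ S) := by
          have := hdisj (A \ S) (by intro x hx; simp only [Finset.mem_sdiff] at hx; simpa using hx.2)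
          exact (this.mono_right hUS).symm
        have h4 : (U ∪ (A \ S)).card = (A \ S).card + a + 1 := by
          rw [Finset.card_union_of_disjoint hd2, ha]; ring
        rw [hU2] at h4
        exact h4
      rw [hAcard]
      norm_num
  rw [step2, Finset.sum_powerset]
  have step3 : ∀ j ∈ Finset.range (Sᶜ.card + 1),
      (∑ V ∈ Finset.powersetCard j Sᶜ, (1 : ℚ) / ((d - 1).choose (V.card + a) : ℚ))
        = (Sᶜ.card.choose j : ℚ) * (1 / ((d - 1).choose (j + a) : ℚ)) := by
    intro j hj
    rw [Finset.sum_powersetCard j Sᶜ (fun k => (1 : ℚ) / ((d - 1).choose (k + a) : ℚ))]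
    simp [nsmul_eq_mul, mul_comm]
  rw [Finset.sum_congr rfl step3, hSc]
  have hd1 : d - 1 = m + a + b := by omega
  rw [hd1]
  have := shapley_final a b m
  rw [this]
  have h1 : S.card - 1 = a + b := by omega
  have h2 : U.card - 1 = a := by omega
  rw [h1, h2]
  have hdq : (d : ℚ) = ((m + a + b + 1 : ℕ) : ℚ) := by exact_mod_cast congrArg Nat.cast hm
  rw [hdq, hb]
end

section
/- Let d and u be integers with u ≥ 1 and d ≥ u + 3. Then ∑_{j=0}^{d−u−2} ((d−u−2) choose j) / ((d−1) choose (j+u−1)) = 2d / ((u+2)(u+1)u). -/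
open Finset

lemma lemA (N k : ℕ) (hk : k ≤ N) :
    (1:ℚ)/((N+1).choose k) + 1/((N+1).choose (k+1))
      = ((N:ℚ)+2)/((N:ℚ)+1) * (1/(N.choose k)) := by
  have h1 : (0:ℚ) < ((N+1).choose k : ℚ) := by
    exact_mod_cast Nat.choose_pos (by omega)
  have h2 : (0:ℚ) < ((N+1).choose (k+1) : ℚ) := by
    exact_mod_cast Nat.choose_pos (by omega)
  have h3 : (0:ℚ) < (N.choose k : ℚ) := by exact_mod_cast Nat.choose_pos hk
  have key : (N+1) * N.choose k * (N+2).choose (k+1)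
      = (N+2) * ((N+1).choose k * (N+1).choose (k+1)) := by
    have e1 : (N+1) * N.choose k = (N+1).choose (k+1) * (k+1) :=
      Nat.add_one_mul_choose_eq N k
    have e2 : (N+2) * (N+1).choose k = (N+2).choose (k+1) * (k+1) :=
      Nat.add_one_mul_choose_eq (N+1) k
    calc (N+1) * N.choose k * (N+2).choose (k+1)
        = (N+1).choose (k+1) * (k+1) * (N+2).choose (k+1) := by rw [e1]
      _ = (N+1).choose (k+1) * ((N+2).choose (k+1) * (k+1)) := by ring
      _ = (N+1).choose (k+1) * ((N+2) * (N+1).choose k) := by rw [e2]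
      _ = (N+2) * ((N+1).choose k * (N+1).choose (k+1)) := by ring
  have pascal : ((N+1).choose k : ℚ) + ((N+1).choose (k+1) : ℚ)
      = ((N+2).choose (k+1) : ℚ) := by
    have := Nat.choose_succ_succ (N+1) k
    push_cast [this]
    ring
  have keyQ : ((N:ℚ)+1) * (N.choose k : ℚ) * ((N+2).choose (k+1) : ℚ)
      = ((N:ℚ)+2) * (((N+1).choose k : ℚ) * ((N+1).choose (k+1) : ℚ)) := by
    exact_mod_cast key
  field_simp
  rw [show (((N+1).choose (k+1) : ℚ) + ((N+1).choose k : ℚ)) = ((N+2).choose (k+1) : ℚ) from by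
    rw [← pascal]; ring]
  linear_combination keyQ

lemma lemB (s t n : ℕ) :
    ∑ j ∈ range (n+2), ((n+1).choose j : ℚ)/((n+1+s).choose (j+t))
      = ∑ j ∈ range (n+1), (n.choose j : ℚ) *
          (1/((n+1+s).choose (j+t)) + 1/((n+1+s).choose (j+t+1))) := by
  rw [Finset.sum_range_succ' (fun j => ((n+1).choose j : ℚ)/((n+1+s).choose (j+t))) (n+1)]
  have step : ∀ j, ((n+1).choose (j+1) : ℚ)/((n+1+s).choose (j+1+t))
      = (n.choose j : ℚ)/((n+1+s).choose (j+t+1))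
        + (n.choose (j+1) : ℚ)/((n+1+s).choose (j+1+t)) := by
    intro j
    have hidx : j+1+t = j+t+1 := by omega
    rw [hidx, Nat.choose_succ_succ n j]
    push_cast
    rw [add_div]
  simp only [step]
  rw [Finset.sum_add_distrib]
  simp only [mul_add, Finset.sum_add_distrib, mul_one_div]
  have e1 : ∑ j ∈ range (n+1), (n.choose (j+1) : ℚ)/((n+1+s).choose (j+1+t))
      = ∑ j ∈ range n, (n.choose (j+1) : ℚ)/((n+1+s).choose (j+1+t)) := by
    rw [Finset.sum_range_succ]
    simp [Nat.choose_succ_self]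
  have e2 : ∑ j ∈ range (n+1), (n.choose j : ℚ)/((n+1+s).choose (j+t))
      = (∑ j ∈ range n, (n.choose (j+1) : ℚ)/((n+1+s).choose (j+1+t)))
        + (n.choose 0 : ℚ)/((n+1+s).choose (0+t)) := by
    rw [Finset.sum_range_succ' (fun j => (n.choose j : ℚ)/((n+1+s).choose (j+t))) n]
  rw [e1, e2]
  simp only [Nat.choose_zero_right, Nat.cast_one]
  ring

lemma auxsum (s t : ℕ) (ht : t ≤ s) : ∀ n : ℕ,
    ∑ j ∈ range (n+1), (n.choose j : ℚ)/((n+s).choose (j+t))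
      = ((n:ℚ)+s+1)/(((s:ℚ)+1) * (s.choose t)) := by
  intro n
  induction n with
  | zero =>
    have h : (0:ℚ) < (s.choose t : ℚ) := by exact_mod_cast Nat.choose_pos ht
    simp only [Finset.sum_range_one, Nat.choose_zero_right, Nat.cast_one, Nat.zero_add,
      Nat.cast_zero, zero_add]
    have h1 : ((s:ℚ)+1) ≠ 0 := by positivity
    field_simp
  | succ n ih =>
    have hN : (n+1) + s = (n+s) + 1 := by ring
    have key : ∑ j ∈ range (n+1+1), ((n+1).choose j : ℚ)/(((n+1)+s).choose (j+t))
        = ((n:ℚ)+s+2)/((n:ℚ)+s+1) *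
          ∑ j ∈ range (n+1), (n.choose j : ℚ)/((n+s).choose (j+t)) := by
      rw [show (n+1)+s = n+1+s from rfl]
      rw [lemB s t n]
      rw [Finset.mul_sum]
      apply Finset.sum_congr rfl
      intro j hj
      have hj' : j ≤ n := by simpa using Nat.lt_succ_iff.mp (Finset.mem_range.mp hj)
      have hA := lemA (n+s) (j+t) (by omega)
      rw [show n+1+s = (n+s)+1 from by ring]
      rw [hA]
      push_cast
      ring
    rw [key, ih]
    have h1 : ((n:ℚ)+s+1) ≠ 0 := by positivity
    field_simp
    push_cast
    ring

/-- Specialization of the combinatorial equality giving the C-Shapley weights: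
for integers `u ≥ 1` and `d ≥ u + 3`,
`∑_{j=0}^{d−u−2} ((d−u−2) choose j) / ((d−1) choose (j+u−1)) = 2d / ((u+2)(u+1)u)`. -/
theorem cshapley_weight_identity (d u : ℕ) (hu : 1 ≤ u) (hd : u + 3 ≤ d) :
    ∑ j ∈ Finset.range (d - u - 2 + 1),
        ((d - u - 2).choose j : ℚ) / ((d - 1).choose (j + u - 1) : ℚ)
      = 2 * (d : ℚ) / (((u : ℚ) + 2) * ((u : ℚ) + 1) * (u : ℚ)) := by
  have key := auxsum (u+1) (u-1) (by omega) (d-u-2)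
  have e1 : d - u - 2 + (u+1) = d - 1 := by omega
  rw [e1] at key
  have e2 : ∀ j, j + u - 1 = j + (u - 1) := by intro j; omega
  simp only [e2] at *
  rw [key]
  have hc : ((u+1).choose (u-1) : ℚ) = ((u:ℚ)+1)*u/2 := by
    have hsym : (u+1).choose (u-1) = (u+1).choose 2 := by
      rw [← Nat.choose_symm (by omega : u-1 ≤ u+1)]
      congr 1
      omega
    have h2 : (u+1).choose 2 * 2 = (u+1) * u := by
      rw [Nat.choose_two_right]
      simp only [Nat.add_sub_cancel]
      exact Nat.div_mul_cancel ((by simpa [mul_comm] using Nat.even_mul_succ_self u : Even ((u+1)*u)).two_dvd)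
    rw [hsym]
    have : ((u+1).choose 2 : ℚ) * 2 = ((u:ℚ)+1) * u := by exact_mod_cast h2
    linarith
  rw [hc]
  have e3 : ((d - u - 2 : ℕ) : ℚ) = (d:ℚ) - u - 2 := by
    have h1 : d - u - 2 = d - (u+2) := by omega
    rw [h1, Nat.cast_sub (by omega)]
    push_cast; ring
  rw [e3]
  have hu0 : (0:ℚ) < (u:ℚ) := by exact_mod_cast hu
  field_simp
  push_cast
  ring
end

section
/- Let p be a strictly positive joint probability mass function of random variables (X_1, …, X_d, Y), where each X_j takes values in a finite type 𝒳_j and Y takes values in a finite type 𝒴. Fix a point x ∈ ∏_j 𝒳_j, an index i ∈ {1,…,d}, a subset U ⊆ {1,…,d} with i ∈ U, and a subset V ⊆ {1,…,d} disjoint from U. Then for every y ∈ 𝒴: log( p(y | x_{U∪V}) / p(y | x_{(U∪V)\{i}}) ) − log( p(y | x_U) / p(y | x_{U\{i}}) ) = log( p(x_i, x_V | x_{U\{i}}, y) / ( p(x_i | x_{U\{i}}, y) · p(x_V | x_{U\{i}}, y) ) ) − log( p(x_i, x_V | x_{U\{i}}) / ( p(x_i | x_{U\{i}}) · p(x_V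 | x_{U\{i}}) ) ). -/
open scoped Classical BigOperators

variable {d : ℕ} {𝒳 : Fin d → Type*} [∀ j, Fintype (𝒳 j)] {𝒴 : Type*} [Fintype 𝒴]

/-- The joint marginal probability `p(x_S, y)` of `(X_S, Y)` at the restriction of `x` to `S`. -/
noncomputable def margXY (p : (∀ j, 𝒳 j) → 𝒴 → ℝ) (S : Finset (Fin d))
    (x : ∀ j, 𝒳 j) (y : 𝒴) : ℝ :=
  ∑ x' : ∀ j, 𝒳 j, if ∀ j ∈ S, x' j = x j then p x' y else 0

/-- The marginal probability `p(x_S)` of `X_S` at the restriction of `x` to `S`. -/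
noncomputable def margX (p : (∀ j, 𝒳 j) → 𝒴 → ℝ) (S : Finset (Fin d))
    (x : ∀ j, 𝒳 j) : ℝ :=
  ∑ y, margXY p S x y

/-- The marginal probability `p(x)` of the full feature vector `X`. -/
noncomputable def pX (p : (∀ j, 𝒳 j) → 𝒴 → ℝ) (x : ∀ j, 𝒳 j) : ℝ :=
  ∑ y, p x y

/-- The conditional probability `p(y | x_S) = p(y, x_S) / p(x_S)`
(for `S = ∅` this is `p(y)` when `p` sums to one). -/
noncomputable def condY (p : (∀ j, 𝒳 j) → 𝒴 → ℝ) (S : Finset (Fin d))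
    (x : ∀ j, 𝒳 j) (y : 𝒴) : ℝ :=
  margXY p S x y / margX p S x

/-- The importance score `v_x(S) = ∑_y p(y | x) log p(y | x_S)`. -/
noncomputable def impScore (p : (∀ j, 𝒳 j) → 𝒴 → ℝ) (x : ∀ j, 𝒳 j)
    (S : Finset (Fin d)) : ℝ :=
  ∑ y, condY p Finset.univ x y * Real.log (condY p S x y)

/-- The marginal contribution `m_x(S, i) = v_x(S) − v_x(S \ {i})`. -/
noncomputable def margContrib (p : (∀ j, 𝒳 j) → 𝒴 → ℝ) (x : ∀ j, 𝒳 j)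
    (S : Finset (Fin d)) (i : Fin d) : ℝ :=
  impScore p x S - impScore p x (S.erase i)

/-- The Shapley value `φ_x(i)`. -/
noncomputable def shapley (p : (∀ j, 𝒳 j) → 𝒴 → ℝ) (x : ∀ j, 𝒳 j) (i : Fin d) : ℝ :=
  (1 / (d : ℝ)) * ∑ A : Finset (Fin d),
    if i ∈ A then margContrib p x A i / ((d - 1).choose (A.card - 1) : ℝ) else 0

/-- The restricted Shapley estimate `φ̂^S_x(i)` over a feature subset `S` containing `i`. -/
noncomputable def shapleyRes (p : (∀ j, 𝒳 j) → 𝒴 → ℝ) (x : ∀ j, 𝒳 j)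
    (S : Finset (Fin d)) (i : Fin d) : ℝ :=
  (1 / (S.card : ℝ)) * ∑ T ∈ S.powerset,
    if i ∈ T then margContrib p x T i / ((S.card - 1).choose (T.card - 1) : ℝ) else 0

/-- The absolute conditional mutual information `I_a(X_A; X_B | X_C)`. -/
noncomputable def IaX (p : (∀ j, 𝒳 j) → 𝒴 → ℝ) (A B C : Finset (Fin d)) : ℝ :=
  ∑ x : ∀ j, 𝒳 j, pX p x *
    |Real.log ((margX p (A ∪ B ∪ C) x * margX p C x) /
      (margX p (A ∪ C) x * margX p (B ∪ C) x))|

/-- The absolute conditional mutual information `I_a(X_A; X_B | X_C, Y)`. -/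
noncomputable def IaXY (p : (∀ j, 𝒳 j) → 𝒴 → ℝ) (A B C : Finset (Fin d)) : ℝ :=
  ∑ x : ∀ j, 𝒳 j, ∑ y, p x y *
    |Real.log ((margXY p (A ∪ B ∪ C) x y * margXY p C x y) /
      (margXY p (A ∪ C) x y * margXY p (B ∪ C) x y))|

lemma margXY_pos (p : (∀ j, 𝒳 j) → 𝒴 → ℝ) (hpos : ∀ x y, 0 < p x y)
    (S : Finset (Fin d)) (x : ∀ j, 𝒳 j) (y : 𝒴) : 0 < margXY p S x y := by
  unfold margXY
  apply Finset.sum_pos' (fun x' _ => by split <;> [exact (hpos x' y).le; rfl])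
  exact ⟨x, Finset.mem_univ x, by rw [if_pos (fun j _ => rfl)]; exact hpos x y⟩

lemma margX_pos [Nonempty 𝒴] (p : (∀ j, 𝒳 j) → 𝒴 → ℝ) (hpos : ∀ x y, 0 < p x y)
    (S : Finset (Fin d)) (x : ∀ j, 𝒳 j) : 0 < margX p S x := by
  exact Finset.sum_pos (fun y _ => margXY_pos p hpos S x y) Finset.univ_nonempty

/-- The pointwise log-ratio identity: for a strictly positive joint pmf `p`, a point `x`,
an index `i ∈ U`, and `V` disjoint from `U`, for every `y`,
`log(p(y|x_{U∪V})/p(y|x_{(U∪V)\{i}})) − log(p(y|x_U)/p(y|x_{U\{i}}))`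
equals the difference of the conditional pointwise-mutual-information terms. -/
theorem log_ratio_identity (p : (∀ j, 𝒳 j) → 𝒴 → ℝ)
    (hpos : ∀ x y, 0 < p x y)
    (hsum : ∑ x : ∀ j, 𝒳 j, ∑ y, p x y = 1)
    (x : ∀ j, 𝒳 j) (i : Fin d) (U V : Finset (Fin d))
    (hiU : i ∈ U) (hUV : Disjoint U V) (y : 𝒴) :
    Real.log (condY p (U ∪ V) x y / condY p ((U ∪ V).erase i) x y)
      - Real.log (condY p U x y / condY p (U.erase i) x y)
    = Real.log ((margXY p ({i} ∪ V ∪ U.erase i) x y / margXY p (U.erase i) x y) /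
          ((margXY p ({i} ∪ U.erase i) x y / margXY p (U.erase i) x y) *
            (margXY p (V ∪ U.erase i) x y / margXY p (U.erase i) x y)))
      - Real.log ((margX p ({i} ∪ V ∪ U.erase i) x / margX p (U.erase i) x) /
          ((margX p ({i} ∪ U.erase i) x / margX p (U.erase i) x) *
            (margX p (V ∪ U.erase i) x / margX p (U.erase i) x))) := by
  have hY : Nonempty 𝒴 := by
    rcases isEmpty_or_nonempty 𝒴 with h | h
    · simp [Finset.univ_eq_empty] at hsum
    · exact h
  have hiV : i ∉ V := fun h => Finset.disjoint_left.mp hUV hiU h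
  have hE1 : ({i} ∪ V ∪ U.erase i : Finset (Fin d)) = U ∪ V := by
    ext a
    simp only [Finset.mem_union, Finset.mem_erase, Finset.mem_singleton]
    constructor
    · rintro ((rfl | h) | ⟨_, h⟩) <;> tauto
    · rintro (h | h)
      · by_cases ha : a = i <;> tauto
      · tauto
  have hE2 : ({i} ∪ U.erase i : Finset (Fin d)) = U := by
    rw [← Finset.insert_eq, Finset.insert_erase hiU]
  have hE3 : (V ∪ U.erase i : Finset (Fin d)) = (U ∪ V).erase i := by
    ext a
    simp only [Finset.mem_union, Finset.mem_erase]
    constructor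
    · rintro (h | ⟨h1, h2⟩)
      · exact ⟨fun hai => hiV (hai ▸ h), Or.inr h⟩
      · tauto
    · rintro ⟨h1, h2 | h2⟩ <;> tauto
  rw [hE1, hE2, hE3]
  have L : ∀ a b c e : ℝ, 0 < a → 0 < b → 0 < c → 0 < e →
      Real.log ((a / b) / (c / e)) = Real.log a - Real.log b - Real.log c + Real.log e := by
    intro a b c e ha hb hc he
    rw [Real.log_div (by positivity) (by positivity), Real.log_div (by positivity)
      (by positivity), Real.log_div (by positivity) (by positivity)]
    ring
  have R : ∀ a b c e : ℝ, 0 < a → 0 < b → 0 < c → 0 < e →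
      Real.log ((a / e) / ((b / e) * (c / e))) =
        Real.log a - Real.log b - Real.log c + Real.log e := by
    intro a b c e ha hb hc he
    rw [Real.log_div (by positivity) (by positivity),
      Real.log_mul (by positivity) (by positivity),
      Real.log_div (by positivity) (by positivity),
      Real.log_div (by positivity) (by positivity),
      Real.log_div (by positivity) (by positivity)]
    ring
  have h1 := margXY_pos p hpos (U ∪ V) x y
  have h2 := margXY_pos p hpos ((U ∪ V).erase i) x y
  have h3 := margXY_pos p hpos U x y
  have h4 := margXY_pos p hpos (U.erase i) x y
  have g1 := margX_pos p hpos (U ∪ V) x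
  have g2 := margX_pos p hpos ((U ∪ V).erase i) x
  have g3 := margX_pos p hpos U x
  have g4 := margX_pos p hpos (U.erase i) x
  simp only [condY]
  rw [L _ _ _ _ h1 g1 h2 g2, L _ _ _ _ h3 g3 h4 g4,
    R _ _ _ _ h1 h3 h2 h4, R _ _ _ _ g1 g3 g2 g4]
  ring
end

section
/- Let G be a finite graph on vertex set V, and let v be a real-valued set function on subsets of V that is decomposable over connected components: for every subset S ⊆ V, v(S) = ∑_{T ∈ C_G(S)} v(T), where C_G(S) is the set of connected components of the subgraph of G induced by S (in particular v(∅) = 0). Then for every vertex i and every subset A ⊆ V with i ∈ A, the marginal contribution of i to A depends only on the connected component of i in A: writing U for the connected component of the induced subgraph on A that contains i, one has v(A) − v(A \ {i}) = v(U) − v(U \ {i}). -/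
open scoped Classical

/-- `a` and `b` are connected within `S`: there is a walk in `G` from `a` to `b`
all of whose vertices lie in `S`. -/
def ReachIn {V : Type*} (G : SimpleGraph V) (S : Finset V) (a b : V) : Prop :=
  ∃ w : G.Walk a b, ∀ v ∈ w.support, v ∈ S

/-- The connected component (as a subset of `S`) of the subgraph of `G` induced
by `S` that contains `a` (empty if `a ∉ S`). -/
noncomputable def compIn {V : Type*} [DecidableEq V] (G : SimpleGraph V)
    (S : Finset V) (a : V) : Finset V :=
  S.filter fun b => ReachIn G S a b

set_option linter.unusedSectionVars false
set_option linter.unusedVariables false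

section
variable {V : Type*} [DecidableEq V] (G : SimpleGraph V) {S A : Finset V} {a b c i : V}

lemma reachIn_refl (h : a ∈ S) : ReachIn G S a a :=
  ⟨SimpleGraph.Walk.nil, by simp [h]⟩

lemma reachIn_symm (h : ReachIn G S a b) : ReachIn G S b a := by
  obtain ⟨w, hw⟩ := h
  exact ⟨w.reverse, by simpa using hw⟩

lemma reachIn_trans (h1 : ReachIn G S a b) (h2 : ReachIn G S b c) : ReachIn G S a c := by
  obtain ⟨w1, hw1⟩ := h1; obtain ⟨w2, hw2⟩ := h2
  refine ⟨w1.append w2, fun x hx => ?_⟩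
  rw [SimpleGraph.Walk.mem_support_append_iff] at hx
  rcases hx with hx | hx
  · exact hw1 x hx
  · exact hw2 x hx

lemma mem_compIn : b ∈ compIn G S a ↔ b ∈ S ∧ ReachIn G S a b := Finset.mem_filter

lemma reachIn_mem_right (h : ReachIn G S a b) : b ∈ S := by
  obtain ⟨w, hw⟩ := h; exact hw b w.end_mem_support

lemma compIn_eq_of_reach (h : ReachIn G S a b) : compIn G S a = compIn G S b := by
  ext x
  simp only [mem_compIn]
  exact ⟨fun ⟨hx, hr⟩ => ⟨hx, reachIn_trans G (reachIn_symm G h) hr⟩,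
         fun ⟨hx, hr⟩ => ⟨hx, reachIn_trans G h hr⟩⟩

lemma compIn_subset : compIn G S a ⊆ S := Finset.filter_subset _ _

lemma mem_compIn_self (h : a ∈ S) : a ∈ compIn G S a :=
  (mem_compIn G).2 ⟨h, reachIn_refl G h⟩

/-- every vertex on a witnessing walk is reachable from the start -/
lemma reachIn_support (w : G.Walk a b) (hw : ∀ v ∈ w.support, v ∈ S)
    (hx : c ∈ w.support) : ReachIn G S a c :=
  ⟨w.takeUntil c hx, fun y hy => hw y (SimpleGraph.Walk.support_takeUntil_subset w hx hy)⟩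

/-- mono: a walk within a subset gives reach in the superset -/
lemma reachIn_mono {T : Finset V} (hTS : T ⊆ S) (h : ReachIn G T a b) : ReachIn G S a b := by
  obtain ⟨w, hw⟩ := h; exact ⟨w, fun x hx => hTS (hw x hx)⟩

/-- component of an unreachable vertex is unchanged by erasing `i` -/
lemma compIn_erase_of_not_reach (ha : a ∈ A) (hna : ¬ ReachIn G A i a) :
    compIn G (A.erase i) a = compIn G A a := by
  ext b
  simp only [mem_compIn, Finset.mem_erase]
  constructor
  · rintro ⟨⟨-, hbA⟩, hr⟩
    exact ⟨hbA, reachIn_mono G (Finset.erase_subset _ _) hr⟩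
  · rintro ⟨hbA, w, hw⟩
    have hi : i ∉ w.support := fun hi =>
      hna (reachIn_symm G (reachIn_support G w hw hi))
    have hbi : b ≠ i := fun h => hi (h ▸ w.end_mem_support)
    exact ⟨⟨hbi, hbA⟩, w, fun x hx => Finset.mem_erase.2 ⟨fun h => hi (h ▸ hx), hw x hx⟩⟩

/-- for `a` in the component `U` of `i`, components in `A.erase i` and `U.erase i` agree -/
lemma compIn_erase_of_reach (hia : ReachIn G A i a) (hai : a ≠ i) :
    compIn G (A.erase i) a = compIn G ((compIn G A i).erase i) a := by
  set U := compIn G A i with hU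
  have hUA : U ⊆ A := compIn_subset G
  ext b
  simp only [mem_compIn, Finset.mem_erase]
  constructor
  · rintro ⟨⟨hbi, hbA⟩, w, hw⟩
    have hsupp : ∀ x ∈ w.support, x ∈ U.erase i := by
      intro x hx
      have hxi : x ≠ i := fun h => ((Finset.mem_erase.1 (hw x hx)).1) (by rw [h]) |>.elim
      have : ReachIn G A a x := by
        have := reachIn_support G w (fun y hy => (Finset.mem_erase.1 (hw y hy)).2) hx
        exact this
      exact Finset.mem_erase.2 ⟨hxi, (mem_compIn G).2 ⟨reachIn_mem_right G this,
        reachIn_trans G hia this⟩⟩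
    exact ⟨Finset.mem_erase.1 (hsupp b w.end_mem_support),
      ⟨w, hsupp⟩⟩
  · rintro ⟨⟨hbi, hbU⟩, hr⟩
    refine ⟨⟨hbi, hUA hbU⟩, reachIn_mono G ?_ hr⟩
    intro x hx
    obtain ⟨hxi, hxU⟩ := Finset.mem_erase.1 hx
    exact Finset.mem_erase.2 ⟨hxi, hUA hxU⟩

/-- inside its own component everything is one component -/
lemma compIn_compIn (ha : a ∈ compIn G A i) : compIn G (compIn G A i) a = compIn G A i := by
  set U := compIn G A i with hU
  have key : ∀ x ∈ U, ReachIn G U i x := by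
    intro x hx
    obtain ⟨hxA, w, hw⟩ := (mem_compIn G).1 hx
    exact ⟨w, fun y hy => (mem_compIn G).2 ⟨hw y hy, reachIn_support G w hw hy⟩⟩
  obtain ⟨haA, hia⟩ := (mem_compIn G).1 ha
  ext b
  simp only [mem_compIn]
  constructor
  · rintro ⟨hbU, -⟩; exact hbU
  · intro hbU
    exact ⟨hbU, reachIn_trans G (reachIn_symm G (key a ha)) (key b hbU)⟩

end


/-- For a set function `v` that is decomposable over connected components of induced
subgraphs (so in particular `v(∅) = 0`), the marginal contribution of a vertex `i` to
a subset `A ∋ i` depends only on the connected component of `i` in `A`: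
`v(A) − v(A \ {i}) = v(U) − v(U \ {i})` where `U` is the component of `i` in `A`. -/
theorem marginal_contribution_component {V : Type*} [Fintype V] [DecidableEq V]
    (G : SimpleGraph V) (v : Finset V → ℝ)
    (hdec : ∀ S : Finset V, v S = ∑ T ∈ S.image (fun a => compIn G S a), v T)
    (i : V) (A : Finset V) (hiA : i ∈ A) :
    v A - v (A.erase i) = v (compIn G A i) - v ((compIn G A i).erase i) := by
  set U := compIn G A i with hU
  have hUA : U ⊆ A := compIn_subset G
  -- decomposition of components of A.erase i
  have key : (A.erase i).image (fun a => compIn G (A.erase i) a)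
      = ((A.image (fun a => compIn G A a)).erase U)
        ∪ ((U.erase i).image (fun a => compIn G (U.erase i) a)) := by
    ext T
    simp only [Finset.mem_union, Finset.mem_erase, Finset.mem_image]
    constructor
    · rintro ⟨a, ⟨hai, haA⟩, rfl⟩
      by_cases hr : ReachIn G A i a
      · right
        refine ⟨a, ⟨hai, (mem_compIn G).2 ⟨haA, hr⟩⟩, ?_⟩
        exact (compIn_erase_of_reach G hr hai).symm
      · left
        rw [compIn_erase_of_not_reach G haA hr]
        refine ⟨fun h => hr ?_, a, haA, rfl⟩
        have : a ∈ U := h ▸ mem_compIn_self G haA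
        exact ((mem_compIn G).1 this).2
    · rintro (⟨hne, a, haA, rfl⟩ | ⟨a, ha, rfl⟩)
      · have hr : ¬ ReachIn G A i a := fun hr => hne (compIn_eq_of_reach G hr).symm
        have hai : a ≠ i := fun h => hr (by subst h; exact reachIn_refl G hiA)
        exact ⟨a, ⟨hai, haA⟩, compIn_erase_of_not_reach G haA hr⟩
      · obtain ⟨hai, haU⟩ := ha
        have hr : ReachIn G A i a := ((mem_compIn G).1 haU).2
        exact ⟨a, ⟨hai, hUA haU⟩, compIn_erase_of_reach G hr hai⟩
  have hdisj : Disjoint ((A.image (fun a => compIn G A a)).erase U)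
      ((U.erase i).image (fun a => compIn G (U.erase i) a)) := by
    rw [Finset.disjoint_left]
    rintro T hT1 hT2
    obtain ⟨hne, a, haA, rfl⟩ := by
      simpa only [Finset.mem_erase, Finset.mem_image] using hT1
    obtain ⟨b, hb, hTb⟩ := Finset.mem_image.1 hT2
    have haT : a ∈ compIn G A a := mem_compIn_self G haA
    have haU : a ∈ U := by
      have := hTb ▸ haT
      exact Finset.mem_of_mem_erase ((compIn_subset G) this)
    exact hne ((compIn_eq_of_reach G ((mem_compIn G).1 haU).2).symm)
  have hUmem : U ∈ A.image (fun a => compIn G A a) :=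
    Finset.mem_image.2 ⟨i, hiA, rfl⟩
  have h1 : v A = (∑ T ∈ (A.image (fun a => compIn G A a)).erase U, v T) + v U := by
    rw [hdec A, ← Finset.sum_erase_add _ _ hUmem]
  have h2 : v (A.erase i) = (∑ T ∈ (A.image (fun a => compIn G A a)).erase U, v T)
      + v (U.erase i) := by
    rw [hdec (A.erase i), key, Finset.sum_union hdisj, hdec (U.erase i)]
  rw [h1, h2]; ring
end
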